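/- A Bell-diagonal two-qubit state ρ = ∑ᵢ λᵢ|Ψᵢ⟩⟨Ψᵢ| (with {|Ψᵢ⟩} the Bell basis, λᵢ ≥ 0, ∑λᵢ = 1) with largest eigenvalue λ₁ ≤ 1/2 is separable; specifically, any rank-2 Bell-diagonal state with λ₁ = 1/2 is an equal mixture of two Bell states and hence separable. -/

import Mathlib

/-- The computational product basis vector `|ab⟩` of two qubits. -/
def ket (a b : Fin 2) : Fin 2 × Fin 2 → ℂ :=
  fun p => (if p.1 = a then 1 else 0) * (if p.2 = b then 1 else 0)

/-- The projector `|v⟩⟨v|` as a matrix. -/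
def proj (v : Fin 2 × Fin 2 → ℂ) : Matrix (Fin 2 × Fin 2) (Fin 2 × Fin 2) ℂ :=
  Matrix.vecMulVec v (star v)

/-- Separability of a two-qubit state: a convex combination of (normalized)
product states. -/
def Separable (ρ : Matrix (Fin 2 × Fin 2) (Fin 2 × Fin 2) ℂ) : Prop :=
  ∃ (m : ℕ) (p : Fin m → ℝ) (u v : Fin m → (Fin 2 → ℂ)),
    (∀ i, 0 ≤ p i) ∧ (∑ i, p i = 1) ∧
    (∀ i, ∑ x, ‖u i x‖ ^ 2 = 1) ∧ (∀ i, ∑ x, ‖v i x‖ ^ 2 = 1) ∧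
    ρ = ∑ i, (p i : ℂ) •
      Matrix.vecMulVec (fun q => u i q.1 * v i q.2) (star fun q => u i q.1 * v i q.2)

/-- The Bell basis `|Φ⁺⟩, |Φ⁻⟩, |Ψ⁺⟩, |Ψ⁻⟩` of two qubits. -/
noncomputable def bellBasis : Fin 4 → (Fin 2 × Fin 2 → ℂ)
  | 0 => fun p => (ket 0 0 p + ket 1 1 p) / (Real.sqrt 2 : ℂ)
  | 1 => fun p => (ket 0 0 p - ket 1 1 p) / (Real.sqrt 2 : ℂ)
  | 2 => fun p => (ket 0 1 p + ket 1 0 p) / (Real.sqrt 2 : ℂ)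
  | 3 => fun p => (ket 0 1 p - ket 1 0 p) / (Real.sqrt 2 : ℂ)

/-! Auxiliary product states and the explicit separable decomposition. -/

noncomputable def q0 : Fin 2 → ℂ := ![1, 0]
noncomputable def q1 : Fin 2 → ℂ := ![0, 1]
noncomputable def qxp : Fin 2 → ℂ := ![((Real.sqrt 2 : ℝ) : ℂ)⁻¹, ((Real.sqrt 2 : ℝ) : ℂ)⁻¹]
noncomputable def qxm : Fin 2 → ℂ := ![((Real.sqrt 2 : ℝ) : ℂ)⁻¹, -((Real.sqrt 2 : ℝ) : ℂ)⁻¹]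
noncomputable def qyp : Fin 2 → ℂ :=
  ![((Real.sqrt 2 : ℝ) : ℂ)⁻¹, Complex.I * ((Real.sqrt 2 : ℝ) : ℂ)⁻¹]
noncomputable def qym : Fin 2 → ℂ :=
  ![((Real.sqrt 2 : ℝ) : ℂ)⁻¹, -(Complex.I * ((Real.sqrt 2 : ℝ) : ℂ)⁻¹)]

noncomputable def U : Fin 16 → (Fin 2 → ℂ) :=
  ![qxp,qxm,qxp,qxm,qyp,qym,qyp,qym,q0,q1,q0,q1,q0,q0,q1,q1]
noncomputable def V : Fin 16 → (Fin 2 → ℂ) :=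
  ![qxp,qxm,qxm,qxp,qyp,qym,qym,qyp,q0,q1,q1,q0,q0,q1,q0,q1]
noncomputable def W (a a' b b' c c' : ℝ) : Fin 16 → ℝ :=
  ![a/2,a/2,a'/2,a'/2,b/2,b/2,b'/2,b'/2,c/2,c/2,c'/2,c'/2,
    (1-(a+a'+b+b'+c+c'))/4,(1-(a+a'+b+b'+c+c'))/4,
    (1-(a+a'+b+b'+c+c'))/4,(1-(a+a'+b+b'+c+c'))/4]

lemma nq0 : ∑ x, ‖q0 x‖ ^ 2 = 1 := by simp [q0, Fin.sum_univ_two]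
lemma nq1 : ∑ x, ‖q1 x‖ ^ 2 = 1 := by simp [q1, Fin.sum_univ_two]
lemma nqxp : ∑ x, ‖qxp x‖ ^ 2 = 1 := by simp [qxp, Fin.sum_univ_two]; norm_num
lemma nqxm : ∑ x, ‖qxm x‖ ^ 2 = 1 := by simp [qxm, Fin.sum_univ_two]; norm_num
lemma nqyp : ∑ x, ‖qyp x‖ ^ 2 = 1 := by simp [qyp, Fin.sum_univ_two]; norm_num
lemma nqym : ∑ x, ‖qym x‖ ^ 2 = 1 := by simp [qym, Fin.sum_univ_two]; norm_num

set_option maxHeartbeats 4000000 in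
lemma key (l0 l1 l2 l3 a b c a' b' c' : ℝ)
    (hsum : l3 = 1 - (l0 + l1 + l2))
    (h1 : a' = a - (l0 - l1 + l2 - l3))
    (h2 : b' = b - (-l0 + l1 + l2 - l3))
    (h3 : c' = c - (l0 + l1 - l2 - l3)) :
    (l0:ℂ) • proj (bellBasis 0) + (l1:ℂ) • proj (bellBasis 1) +
      (l2:ℂ) • proj (bellBasis 2) + (l3:ℂ) • proj (bellBasis 3)
    = ∑ i : Fin 16, ((W a a' b b' c c' i : ℝ) : ℂ) •
        Matrix.vecMulVec (fun q => U i q.1 * V i q.2) (star fun q => U i q.1 * V i q.2) := by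
  subst h1 h2 h3 hsum
  have hS : ((Real.sqrt 2 : ℝ) : ℂ) ^ 2 = 2 := by
    norm_cast; rw [Real.sq_sqrt] <;> norm_num
  set S : ℂ := ((Real.sqrt 2 : ℝ) : ℂ) with hSdef
  have e4 : S^4 = 4 := by rw [show S^4 = (S^2)^2 by ring, hS]; norm_num
  have e6 : S^6 = 8 := by rw [show S^6 = (S^2)^3 by ring, hS]; norm_num
  have e8 : S^8 = 16 := by rw [show S^8 = (S^2)^4 by ring, hS]; norm_num
  have e10 : S^10 = 32 := by rw [show S^10 = (S^2)^5 by ring, hS]; norm_num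
  have e12 : S^12 = 64 := by rw [show S^12 = (S^2)^6 by ring, hS]; norm_num
  have i2 : (S⁻¹)^2 = 2⁻¹ := by rw [inv_pow, hS]
  have i4 : (S⁻¹)^4 = 4⁻¹ := by rw [inv_pow, e4]
  have i6 : (S⁻¹)^6 = 8⁻¹ := by rw [inv_pow, e6]
  have i8 : (S⁻¹)^8 = 16⁻¹ := by rw [inv_pow, e8]
  ext i j
  obtain ⟨i1, i2'⟩ := i
  obtain ⟨j1, j2'⟩ := j
  fin_cases i1 <;> fin_cases i2' <;> fin_cases j1 <;> fin_cases j2' <;>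
    simp [Fin.sum_univ_succ, Matrix.sum_apply, proj, bellBasis, ket, W, U, V,
        Matrix.vecMulVec_apply, q0, q1, qxp, qxm, qyp, qym] <;>
    push_cast <;> (try field_simp) <;> ring_nf <;>
    (try simp [← hSdef, Complex.I_sq, hS, e4, e6, e8, e10, e12, i2, i4, i6, i8]) <;>
    (try ring_nf) <;> (try norm_num) <;> (try ring_nf)

set_option maxHeartbeats 4000000 in
lemma main_sep (lam : Fin 4 → ℝ) (h0 : ∀ i, 0 ≤ lam i) (hsum : ∑ i, lam i = 1)
    (hhalf : ∀ i, lam i ≤ 1 / 2) :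
    Separable (∑ i, ((lam i : ℂ)) • proj (bellBasis i)) := by
  rw [Fin.sum_univ_four] at hsum ⊢
  set t1 : ℝ := lam 0 - lam 1 + lam 2 - lam 3 with ht1
  set t2 : ℝ := -lam 0 + lam 1 + lam 2 - lam 3 with ht2
  set t3 : ℝ := lam 0 + lam 1 - lam 2 - lam 3 with ht3
  have hh0 := hhalf 0; have hh1 := hhalf 1; have hh2 := hhalf 2; have hh3 := hhalf 3
  have hn0 := h0 0; have hn1 := h0 1; have hn2 := h0 2; have hn3 := h0 3
  have habs : |t1| + |t2| + |t3| ≤ 1 := by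
    rcases abs_cases t1 with ⟨e1, _⟩ | ⟨e1, _⟩ <;> rcases abs_cases t2 with ⟨e2, _⟩ | ⟨e2, _⟩ <;>
      rcases abs_cases t3 with ⟨e3, _⟩ | ⟨e3, _⟩ <;> rw [e1, e2, e3, ht1, ht2, ht3] <;> linarith
  have m1 := max_zero_add_max_neg_zero_eq_abs_self t1
  have m2 := max_zero_add_max_neg_zero_eq_abs_self t2
  have m3 := max_zero_add_max_neg_zero_eq_abs_self t3
  have hr : 0 ≤ 1 - (max t1 0 + max (-t1) 0 + max t2 0 + max (-t2) 0 +
      max t3 0 + max (-t3) 0) := by linarith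
  refine ⟨16, W (max t1 0) (max (-t1) 0) (max t2 0) (max (-t2) 0) (max t3 0) (max (-t3) 0),
    U, V, ?_, ?_, ?_, ?_, ?_⟩
  · intro i
    fin_cases i <;> simp [W] <;>
      first
        | exact div_nonneg (le_max_right _ _) (by norm_num)
        | (apply div_nonneg _ (by norm_num : (0:ℝ) ≤ 4); linarith [m1, m2, m3, habs])
  · simp only [W, Fin.sum_univ_succ, Fin.sum_univ_zero, Matrix.cons_val_zero,
      Matrix.cons_val_succ, Matrix.cons_val_one, Matrix.head_cons]
    ring
  · intro i
    fin_cases i <;> simp only [U, Matrix.cons_val_zero, Matrix.cons_val_one, Matrix.head_cons,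
      Matrix.cons_val_succ] <;>
      first | exact nq0 | exact nq1 | exact nqxp | exact nqxm | exact nqyp | exact nqym
  · intro i
    fin_cases i <;> simp only [V, Matrix.cons_val_zero, Matrix.cons_val_one, Matrix.head_cons,
      Matrix.cons_val_succ] <;>
      first | exact nq0 | exact nq1 | exact nqxp | exact nqxm | exact nqyp | exact nqym
  · refine key (lam 0) (lam 1) (lam 2) (lam 3) (max t1 0) (max t2 0) (max t3 0) _ _ _
      (by linarith) ?_ ?_ ?_
    · have := max_zero_sub_max_neg_zero_eq_self t1
      rw [← ht1]; linarith
    · have := max_zero_sub_max_neg_zero_eq_self t2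
      rw [← ht2]; linarith
    · have := max_zero_sub_max_neg_zero_eq_self t3
      rw [← ht3]; linarith

set_option maxHeartbeats 4000000 in
theorem bell_diagonal_lambda_le_half_separable :
    (∀ lam : Fin 4 → ℝ, (∀ i, 0 ≤ lam i) → (∑ i, lam i = 1) →
      (∀ i, lam i ≤ 1 / 2) →
      Separable (∑ i, ((lam i : ℂ)) • proj (bellBasis i))) ∧
    (∀ i j : Fin 4, i ≠ j →
      Separable ((1 / 2 : ℂ) • (proj (bellBasis i) + proj (bellBasis j)))) := by
  refine ⟨main_sep, ?_⟩
  intro i j hij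
  set lam : Fin 4 → ℝ := fun k => if k = i ∨ k = j then 1/2 else 0 with hlam
  have h0 : ∀ k, 0 ≤ lam k := by intro k; simp only [hlam]; split <;> norm_num
  have hhalf : ∀ k, lam k ≤ 1 / 2 := by intro k; simp only [hlam]; split <;> norm_num
  have hsum : ∑ k, lam k = 1 := by
    rw [Fin.sum_univ_four]
    fin_cases i <;> fin_cases j <;> simp_all [hlam] <;> norm_num
  have h := main_sep lam h0 hsum hhalf
  have heq : (∑ k, ((lam k : ℂ)) • proj (bellBasis k))
      = (1 / 2 : ℂ) • (proj (bellBasis i) + proj (bellBasis j)) := by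
    rw [Fin.sum_univ_four]
    fin_cases i <;> fin_cases j <;> (try exact absurd rfl hij) <;>
      simp [hlam] <;> push_cast <;> module
  rwa [heq] at h
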